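/- arXiv:1812.03759 — 5 statements merged into one kernel-verified Lean document; each statement's English description precedes it below -/
import Mathlib

section
/- Let s > 0 and let σ, ρ, τ, ε be real numbers. The symmetric (2l+l)-block matrix G₀ with block rows [(σ + (ε²−1)/s)I, 0, −εI], [0, (ρ + (τ²−1)/s)I, −τI], [−εI, −τI, sI] (each block an l×l multiple of the identity) is positive definite if and only if σ − 1/s > 0 and (σs − 1)(ρs − 1) > τ²ε². -/
open Matrix

/-- positive definiteness characterization of the block matrix `G₀`
whose blocks are multiples of the `l × l` identity. -/
theorem stmt2 {l : ℕ} (hl : 0 < l)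
    (σ ρ s τ ε : ℝ) (hs : s > 0)
    (G₀ : Matrix (Fin l ⊕ (Fin l ⊕ Fin l)) (Fin l ⊕ (Fin l ⊕ Fin l)) ℝ)
    (hG₀ : G₀ = Matrix.fromBlocks
      ((σ + (ε ^ 2 - 1) / s) • (1 : Matrix (Fin l) (Fin l) ℝ))
      (Matrix.fromCols 0 ((-ε) • (1 : Matrix (Fin l) (Fin l) ℝ)))
      (Matrix.fromRows 0 ((-ε) • (1 : Matrix (Fin l) (Fin l) ℝ)))
      (Matrix.fromBlocks ((ρ + (τ ^ 2 - 1) / s) • (1 : Matrix (Fin l) (Fin l) ℝ))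
        ((-τ) • (1 : Matrix (Fin l) (Fin l) ℝ))
        ((-τ) • (1 : Matrix (Fin l) (Fin l) ℝ))
        (s • (1 : Matrix (Fin l) (Fin l) ℝ)))) :
    G₀.PosDef ↔ (σ - 1 / s > 0 ∧ (σ * s - 1) * (ρ * s - 1) > τ ^ 2 * ε ^ 2) := by
  have hs0 : s ≠ 0 := ne_of_gt hs
  set Q : ℝ → ℝ → ℝ → ℝ := fun x y z =>
    (σ + (ε ^ 2 - 1) / s) * x ^ 2 + (ρ + (τ ^ 2 - 1) / s) * y ^ 2 + s * z ^ 2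
      - 2 * ε * x * z - 2 * τ * y * z with hQ
  have key : ∀ a b c : Fin l → ℝ,
      (Sum.elim a (Sum.elim b c)) ⬝ᵥ (G₀ *ᵥ (Sum.elim a (Sum.elim b c))) =
      ∑ i, Q (a i) (b i) (c i) := by
    intro a b c
    rw [hG₀, fromBlocks_mulVec]
    simp only [Sum.elim_comp_inl, Sum.elim_comp_inr]
    rw [fromBlocks_mulVec]
    simp only [Sum.elim_comp_inl, Sum.elim_comp_inr]
    rw [fromCols_mulVec_sumElim, fromRows_mulVec]
    simp only [smul_mulVec, one_mulVec, Matrix.zero_mulVec, zero_add,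
      dotProduct, Fintype.sum_sum_type, Sum.elim_inl, Sum.elim_inr, Pi.add_apply,
      Pi.smul_apply, smul_eq_mul, Pi.zero_apply, Pi.neg_apply]
    rw [← Finset.sum_add_distrib, ← Finset.sum_add_distrib]
    apply Finset.sum_congr rfl
    intro i _
    simp only [hQ]
    ring
  rw [posDef_iff_dotProduct_mulVec]
  constructor
  · rintro ⟨_, hpd⟩
    set i0 : Fin l := ⟨0, hl⟩ with hi0
    have test : ∀ x y z : ℝ, ¬(x = 0 ∧ y = 0 ∧ z = 0) → 0 < Q x y z := by
      intro x y z hxyz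
      set v : (Fin l ⊕ (Fin l ⊕ Fin l)) → ℝ :=
        Sum.elim (Pi.single i0 x) (Sum.elim (Pi.single i0 y) (Pi.single i0 z)) with hv
      have hvne : v ≠ 0 := by
        intro h
        apply hxyz
        refine ⟨?_, ?_, ?_⟩
        · have := congrFun h (Sum.inl i0)
          simpa [hv] using this
        · have := congrFun h (Sum.inr (Sum.inl i0))
          simpa [hv] using this
        · have := congrFun h (Sum.inr (Sum.inr i0))
          simpa [hv] using this
      have hp := hpd (x := v) hvne
      rw [star_trivial, hv, key] at hp
      rw [Finset.sum_eq_single i0 ?h1 ?h2] at hp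
      · simpa using hp
      · intro b _ hb
        simp only [hQ, Pi.single_eq_of_ne hb]
        ring
      · intro h
        exact absurd (Finset.mem_univ i0) h
    constructor
    · have h := test 1 0 (ε / s) (by simp)
      have hval : Q 1 0 (ε / s) = σ - 1 / s := by
        simp only [hQ]
        field_simp
        ring
      rw [hval] at h
      exact h
    · have h1 : σ - 1 / s > 0 := by
        have h := test 1 0 (ε / s) (by simp)
        have hval : Q 1 0 (ε / s) = σ - 1 / s := by
          simp only [hQ]; field_simp; ring
        rw [hval] at h
        exact h
      have hσs : 0 < σ * s - 1 := by
        have : (σ - 1 / s) * s = σ * s - 1 := by field_simp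
        nlinarith
      have hσs0 : σ * s - 1 ≠ 0 := ne_of_gt hσs
      have h := test (ε * τ / (σ * s - 1)) 1 ((ε * (ε * τ / (σ * s - 1)) + τ) / s)
        (by simp)
      have hval : Q (ε * τ / (σ * s - 1)) 1 ((ε * (ε * τ / (σ * s - 1)) + τ) / s) =
          ((σ * s - 1) * (ρ * s - 1) - τ ^ 2 * ε ^ 2) / (s * (σ * s - 1)) := by
        simp only [hQ]
        field_simp
        ring
      rw [hval] at h
      have hd : 0 < s * (σ * s - 1) := mul_pos hs hσs
      have := mul_pos h hd
      rw [div_mul_cancel₀ _ (ne_of_gt hd)] at this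
      linarith
  · rintro ⟨h1, h2⟩
    have hσs : 0 < σ * s - 1 := by
      have : (σ - 1 / s) * s = σ * s - 1 := by field_simp
      nlinarith
    have hσs0 : σ * s - 1 ≠ 0 := ne_of_gt hσs
    have hN : 0 < (σ * s - 1) * (ρ * s - 1) - τ ^ 2 * ε ^ 2 := by linarith
    have c1 : 0 < (σ * s - 1) / s := div_pos hσs hs
    have c2 : 0 < ((σ * s - 1) * (ρ * s - 1) - τ ^ 2 * ε ^ 2) / (s * (σ * s - 1)) :=
      div_pos hN (mul_pos hs hσs)
    have decomp : ∀ x y z : ℝ, Q x y z =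
        s * (z - (ε * x + τ * y) / s) ^ 2
        + ((σ * s - 1) / s) * (x - (ε * τ / (σ * s - 1)) * y) ^ 2
        + (((σ * s - 1) * (ρ * s - 1) - τ ^ 2 * ε ^ 2) / (s * (σ * s - 1))) * y ^ 2 := by
      intro x y z
      simp only [hQ]
      field_simp
      ring
    have hQnn : ∀ x y z : ℝ, 0 ≤ Q x y z := by
      intro x y z
      rw [decomp]
      have t1 := mul_nonneg hs.le (sq_nonneg (z - (ε * x + τ * y) / s))
      have t2 := mul_nonneg c1.le (sq_nonneg (x - (ε * τ / (σ * s - 1)) * y))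
      have t3 := mul_nonneg c2.le (sq_nonneg y)
      linarith
    have sqpos : ∀ w : ℝ, w ≠ 0 → 0 < w ^ 2 := by
      intro w hw
      rcases lt_or_gt_of_ne hw with h | h <;> nlinarith
    have hQpos : ∀ x y z : ℝ, ¬(x = 0 ∧ y = 0 ∧ z = 0) → 0 < Q x y z := by
      intro x y z hxyz
      rw [decomp]
      have t1 := mul_nonneg hs.le (sq_nonneg (z - (ε * x + τ * y) / s))
      have t2 := mul_nonneg c1.le (sq_nonneg (x - (ε * τ / (σ * s - 1)) * y))
      have t3 := mul_nonneg c2.le (sq_nonneg y)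
      by_cases hy : y = 0
      · by_cases hx : x = 0
        · have hz : z ≠ 0 := by
            intro hz; exact hxyz ⟨hx, hy, hz⟩
          subst hx; subst hy
          have : 0 < (z - (ε * 0 + τ * 0) / s) ^ 2 := by
            apply sqpos; simpa using hz
          nlinarith
        · subst hy
          have : 0 < (x - ε * τ / (σ * s - 1) * 0) ^ 2 := by
            apply sqpos; simpa using hx
          nlinarith
      · have := mul_pos c2 (sqpos y hy)
        linarith
    constructor
    · rw [hG₀]
      show _ = _
      rw [fromBlocks_conjTranspose, fromBlocks_conjTranspose,
        conjTranspose_fromCols_eq_fromRows_conjTranspose,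
        conjTranspose_fromRows_eq_fromCols_conjTranspose]
      simp only [conjTranspose_smul, conjTranspose_one, conjTranspose_zero, star_trivial]
    · intro v hv
      rw [star_trivial]
      have hvrep : v = Sum.elim (fun i => v (Sum.inl i))
          (Sum.elim (fun i => v (Sum.inr (Sum.inl i))) (fun i => v (Sum.inr (Sum.inr i)))) := by
        funext j
        rcases j with i | i | i <;> rfl
      rw [hvrep, key]
      obtain ⟨j, hj⟩ := Function.ne_iff.mp hv
      have hex : ∃ i : Fin l, ¬(v (Sum.inl i) = 0 ∧ v (Sum.inr (Sum.inl i)) = 0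
          ∧ v (Sum.inr (Sum.inr i)) = 0) := by
        rcases j with i | i | i
        · exact ⟨i, fun h => hj h.1⟩
        · exact ⟨i, fun h => hj h.2.1⟩
        · exact ⟨i, fun h => hj h.2.2⟩
      obtain ⟨i, hi⟩ := hex
      apply Finset.sum_pos'
      · intro k _
        exact hQnn _ _ _
      · exact ⟨i, Finset.mem_univ i, hQpos _ _ _ hi⟩
end

section
/- Let f : ℝ^m → ℝ and g : ℝ^n → ℝ be convex, X ⊆ ℝ^m, Y ⊆ ℝ^n closed convex, A ∈ ℝ^{l×m}, B ∈ ℝ^{l×n}, c ∈ ℝ^l, τ ≠ 0, M = X × Y × ℝ^l, φ(x, y) = f(x) + g(y), J(x, y, λ) = τ(−Aᵀλ, −Bᵀλ, Ax + By − c), and let G be a symmetric positive definite (m+n+l)×(m+n+l) matrix. Suppose w^{k+1} ∈ M satisfies φ(u) − φ(u^{k+1}) + ⟨w − w^{k+1}, J(w^{k+1}) + G(w^{k+1} − w^k)⟩ ≥ 0 for all w ∈ M, and let w* ∈ M be a solution of the variational inequality, i.e., φ(u) − φ(u*) + ⟨w − w*, J(w*)⟩ ≥ 0 for all w ∈ M.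 Then ‖w^{k+1} − w*‖_G² ≤ ‖w^k − w*‖_G² − ‖w^{k+1} − w^k‖_G². -/
open Matrix

lemma dot_elim3 {m n l : ℕ} (x : (Fin m ⊕ (Fin n ⊕ Fin l)) → ℝ)
    (p : Fin m → ℝ) (q : Fin n → ℝ) (r : Fin l → ℝ) :
    x ⬝ᵥ Sum.elim p (Sum.elim q r) =
      (x ∘ Sum.inl) ⬝ᵥ p + (x ∘ Sum.inr ∘ Sum.inl) ⬝ᵥ q + (x ∘ Sum.inr ∘ Sum.inr) ⬝ᵥ r := by
  have hx : x = Sum.elim (x ∘ Sum.inl) (Sum.elim (x ∘ Sum.inr ∘ Sum.inl) (x ∘ Sum.inr ∘ Sum.inr)) := by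
    funext i; rcases i with i | i | i <;> rfl
  rw [hx, sumElim_dotProduct_sumElim, sumElim_dotProduct_sumElim]
  ring_nf
  rfl

lemma dot_trans {m l : ℕ} (A : Matrix (Fin l) (Fin m) ℝ) (u : Fin m → ℝ) (v : Fin l → ℝ) :
    u ⬝ᵥ (Aᵀ *ᵥ v) = v ⬝ᵥ (A *ᵥ u) := by
  rw [Matrix.dotProduct_mulVec, Matrix.vecMul_transpose, dotProduct_comm]

/-- Fejér-type contraction of the proximal point iteration
with respect to the `G`-norm. -/
theorem stmt8 {m n l : ℕ}
    (f : (Fin m → ℝ) → ℝ) (g : (Fin n → ℝ) → ℝ)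
    (hf : ConvexOn ℝ Set.univ f) (hg : ConvexOn ℝ Set.univ g)
    (X : Set (Fin m → ℝ)) (Y : Set (Fin n → ℝ))
    (hXcl : IsClosed X) (hXcv : Convex ℝ X) (hYcl : IsClosed Y) (hYcv : Convex ℝ Y)
    (A : Matrix (Fin l) (Fin m) ℝ) (B : Matrix (Fin l) (Fin n) ℝ)
    (c : Fin l → ℝ) (τ : ℝ) (hτ : τ ≠ 0)
    (M : Set ((Fin m ⊕ (Fin n ⊕ Fin l)) → ℝ))
    (hM : M = {w | (w ∘ Sum.inl) ∈ X ∧ (w ∘ Sum.inr ∘ Sum.inl) ∈ Y})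
    (φ : ((Fin m ⊕ (Fin n ⊕ Fin l)) → ℝ) → ℝ)
    (hφ : φ = fun w => f (w ∘ Sum.inl) + g (w ∘ Sum.inr ∘ Sum.inl))
    (J : ((Fin m ⊕ (Fin n ⊕ Fin l)) → ℝ) → ((Fin m ⊕ (Fin n ⊕ Fin l)) → ℝ))
    (hJ : J = fun w => Sum.elim (τ • (-(Aᵀ *ᵥ (w ∘ Sum.inr ∘ Sum.inr))))
        (Sum.elim (τ • (-(Bᵀ *ᵥ (w ∘ Sum.inr ∘ Sum.inr))))
          (τ • (A *ᵥ (w ∘ Sum.inl) + B *ᵥ (w ∘ Sum.inr ∘ Sum.inl) - c))))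
    (G : Matrix (Fin m ⊕ (Fin n ⊕ Fin l)) (Fin m ⊕ (Fin n ⊕ Fin l)) ℝ)
    (hG : G.PosDef)
    (wk wk1 : (Fin m ⊕ (Fin n ⊕ Fin l)) → ℝ) (hwk1 : wk1 ∈ M)
    (hineq : ∀ w ∈ M,
      φ w - φ wk1 + (w - wk1) ⬝ᵥ (J wk1 + G *ᵥ (wk1 - wk)) ≥ 0)
    (wstar : (Fin m ⊕ (Fin n ⊕ Fin l)) → ℝ) (hwstarM : wstar ∈ M)
    (hwstar : ∀ w ∈ M, φ w - φ wstar + (w - wstar) ⬝ᵥ J wstar ≥ 0) :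
    (wk1 - wstar) ⬝ᵥ (G *ᵥ (wk1 - wstar)) ≤
      (wk - wstar) ⬝ᵥ (G *ᵥ (wk - wstar)) - (wk1 - wk) ⬝ᵥ (G *ᵥ (wk1 - wk)) := by
  have hGsym : Gᵀ = G := by
    have := hG.1
    rwa [Matrix.IsHermitian, Matrix.conjTranspose_eq_transpose_of_trivial] at this
  have hsymdot : ∀ x y : (Fin m ⊕ (Fin n ⊕ Fin l)) → ℝ,
      x ⬝ᵥ (G *ᵥ y) = y ⬝ᵥ (G *ᵥ x) := by
    intro x y
    rw [Matrix.dotProduct_mulVec, ← Matrix.mulVec_transpose, hGsym, dotProduct_comm]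
  -- skewness of J
  have hskew : ∀ a b : (Fin m ⊕ (Fin n ⊕ Fin l)) → ℝ,
      (a - b) ⬝ᵥ J a - (a - b) ⬝ᵥ J b = 0 := by
    intro a b
    subst hJ
    simp only [dot_elim3]
    have h1 : ((a - b) ∘ Sum.inl) = (a ∘ Sum.inl) - (b ∘ Sum.inl) := rfl
    have h2 : ((a - b) ∘ Sum.inr ∘ Sum.inl) = (a ∘ Sum.inr ∘ Sum.inl) - (b ∘ Sum.inr ∘ Sum.inl) := rfl
    have h3 : ((a - b) ∘ Sum.inr ∘ Sum.inr) = (a ∘ Sum.inr ∘ Sum.inr) - (b ∘ Sum.inr ∘ Sum.inr) := rfl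
    rw [h1, h2, h3]
    simp only [dotProduct_smul, dotProduct_neg, sub_dotProduct,
      dotProduct_sub, dotProduct_add, smul_eq_mul, dot_trans,
      Matrix.mulVec_sub, Matrix.mulVec_add]
    ring
  have h1 := hineq wstar hwstarM
  have h2 := hwstar wk1 hwk1
  have hkey : (wk1 - wstar) ⬝ᵥ (G *ᵥ (wk - wk1)) ≥ 0 := by
    have hs := hskew wk1 wstar
    have e1 : (wstar - wk1) ⬝ᵥ (J wk1 + G *ᵥ (wk1 - wk)) =
        -((wk1 - wstar) ⬝ᵥ J wk1) + (wk1 - wstar) ⬝ᵥ (G *ᵥ (wk - wk1)) := by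
      rw [show wstar - wk1 = -(wk1 - wstar) from (neg_sub _ _).symm,
        show wk1 - wk = -(wk - wk1) from (neg_sub _ _).symm,
        dotProduct_add, neg_dotProduct, neg_dotProduct,
        Matrix.mulVec_neg, dotProduct_neg]
      ring
    rw [e1] at h1
    linarith
  -- expansion
  have hexp : wk - wstar = (wk1 - wstar) + (wk - wk1) := by ring
  have hexp2 : wk1 - wk = -(wk - wk1) := by ring
  set v := wk1 - wstar
  set d := wk - wk1
  rw [hexp, hexp2]
  rw [add_dotProduct, Matrix.mulVec_add, dotProduct_add, dotProduct_add,
    neg_dotProduct, Matrix.mulVec_neg, dotProduct_neg]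
  have := hsymdot d v
  linarith
end

section
/- Let f : ℝ^m → ℝ and g : ℝ^n → ℝ be convex (hence continuous), X ⊆ ℝ^m, Y ⊆ ℝ^n closed convex, A ∈ ℝ^{l×m}, B ∈ ℝ^{l×n}, c ∈ ℝ^l, τ ≠ 0, M = X × Y × ℝ^l, φ(x, y) = f(x) + g(y), J(x, y, λ) = τ(−Aᵀλ, −Bᵀλ, Ax + By − c), and let G be a symmetric positive definite (m+n+l)×(m+n+l) matrix. Suppose the solution set M* = {w* ∈ M : φ(u) − φ(u*) + ⟨w − w*, J(w*)⟩ ≥ 0 for all w ∈ M} is nonempty, and let {w^k} ⊆ ℝ^{m+n+l} be a sequence with w^{k+1} ∈ M such that for every k ≥ 0, φ(u) − φ(u^{k+1}) + ⟨w − w^{k+1}, J(w^{k+1}) + G(w^{k+1} − w^k)⟩ ≥ 0 for all w ∈ M. Then there exists w^∞ ∈ M* such that w^k → w^∞ as k → ∞. -/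
open Matrix

lemma quad_symm {ι : Type*} [Fintype ι] (G : Matrix ι ι ℝ) (hG : G.PosDef)
    (a b : ι → ℝ) : a ⬝ᵥ (G *ᵥ b) = b ⬝ᵥ (G *ᵥ a) := by
  have hsym : Gᵀ = G := by
    have := hG.1
    rwa [Matrix.IsHermitian, Matrix.conjTranspose_eq_transpose_of_trivial] at this
  rw [Matrix.dotProduct_mulVec, ← Matrix.mulVec_transpose, hsym, dotProduct_comm]

lemma quad_expand {ι : Type*} [Fintype ι] (G : Matrix ι ι ℝ) (hG : G.PosDef)
    (a b : ι → ℝ) :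
    (a - b) ⬝ᵥ (G *ᵥ (a - b)) =
      a ⬝ᵥ (G *ᵥ a) - 2 * (a ⬝ᵥ (G *ᵥ b)) + b ⬝ᵥ (G *ᵥ b) := by
  rw [Matrix.mulVec_sub, sub_dotProduct, dotProduct_sub,
    dotProduct_sub, quad_symm G hG b a]
  ring

lemma quad_cont {ι : Type*} [Fintype ι] (G : Matrix ι ι ℝ) :
    Continuous fun v : ι → ℝ => v ⬝ᵥ (G *ᵥ v) := by
  simp only [dotProduct, Matrix.mulVec]
  exact continuous_finset_sum _ fun i _ => (continuous_apply i).mul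
    (continuous_finset_sum _ fun j _ => (continuous_const.mul (continuous_apply j)))

lemma quad_coercive {ι : Type*} [Fintype ι] [Nonempty ι] [DecidableEq ι]
    (G : Matrix ι ι ℝ) (hG : G.PosDef) :
    ∃ c > 0, ∀ v : ι → ℝ, c * ‖v‖ ^ 2 ≤ v ⬝ᵥ (G *ᵥ v) := by
  have hsph : IsCompact (Metric.sphere (0 : ι → ℝ) 1) := isCompact_sphere _ _
  have hne : (Metric.sphere (0 : ι → ℝ) 1).Nonempty :=
    NormedSpace.sphere_nonempty.2 zero_le_one
  obtain ⟨v₀, hv₀, hmin'⟩ := hsph.exists_isMinOn hne ((quad_cont G).continuousOn)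
  have hmin : ∀ u ∈ Metric.sphere (0 : ι → ℝ) 1, v₀ ⬝ᵥ (G *ᵥ v₀) ≤ u ⬝ᵥ (G *ᵥ u) :=
    fun u hu => hmin' hu
  have hv₀ne : v₀ ≠ 0 := by
    intro h
    have := mem_sphere_zero_iff_norm.1 hv₀
    rw [h, norm_zero] at this; norm_num at this
  refine ⟨v₀ ⬝ᵥ (G *ᵥ v₀), hG.dotProduct_mulVec_pos hv₀ne, fun v => ?_⟩
  rcases eq_or_ne v 0 with rfl | hv
  · simp
  · have hnv : (0:ℝ) < ‖v‖ := norm_pos_iff.2 hv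
    have hu : ‖v‖⁻¹ • v ∈ Metric.sphere (0 : ι → ℝ) 1 := by
      simp [norm_smul, abs_of_pos (inv_pos.2 hnv), inv_mul_cancel₀ hnv.ne']
    have := hmin _ hu
    have hexp : (‖v‖⁻¹ • v) ⬝ᵥ (G *ᵥ (‖v‖⁻¹ • v)) = ‖v‖⁻¹ * ‖v‖⁻¹ * (v ⬝ᵥ (G *ᵥ v)) := by
      rw [Matrix.mulVec_smul, smul_dotProduct, dotProduct_smul]
      simp [mul_assoc]
    rw [hexp] at this
    have h2 : (v₀ ⬝ᵥ (G *ᵥ v₀)) * ‖v‖ ^ 2 ≤ ‖v‖⁻¹ * ‖v‖⁻¹ * (v ⬝ᵥ (G *ᵥ v)) * ‖v‖ ^ 2 :=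
      mul_le_mul_of_nonneg_right this (sq_nonneg _)
    calc v₀ ⬝ᵥ (G *ᵥ v₀) * ‖v‖ ^ 2 ≤ _ := h2
      _ = (‖v‖⁻¹ * ‖v‖) ^ 2 * (v ⬝ᵥ (G *ᵥ v)) := by ring
      _ = v ⬝ᵥ (G *ᵥ v) := by rw [inv_mul_cancel₀ hnv.ne', one_pow, one_mul]

lemma dot_split {α β : Type*} [Fintype α] [Fintype β] (u v : α ⊕ β → ℝ) :
    u ⬝ᵥ v = (u ∘ Sum.inl) ⬝ᵥ (v ∘ Sum.inl) + (u ∘ Sum.inr) ⬝ᵥ (v ∘ Sum.inr) := by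
  simp [dotProduct, Fintype.sum_sum_type, Function.comp]

lemma skewJ {m n l : ℕ}
    (A : Matrix (Fin l) (Fin m) ℝ) (B : Matrix (Fin l) (Fin n) ℝ)
    (c : Fin l → ℝ) (τ : ℝ)
    (J : ((Fin m ⊕ (Fin n ⊕ Fin l)) → ℝ) → ((Fin m ⊕ (Fin n ⊕ Fin l)) → ℝ))
    (hJ : J = fun w => Sum.elim (τ • (-(Aᵀ *ᵥ (w ∘ Sum.inr ∘ Sum.inr))))
        (Sum.elim (τ • (-(Bᵀ *ᵥ (w ∘ Sum.inr ∘ Sum.inr))))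
          (τ • (A *ᵥ (w ∘ Sum.inl) + B *ᵥ (w ∘ Sum.inr ∘ Sum.inl) - c))))
    (a b : (Fin m ⊕ (Fin n ⊕ Fin l)) → ℝ) :
    (a - b) ⬝ᵥ (J a - J b) = 0 := by
  subst hJ
  set d := a - b with hd
  have h1 : (a - b) ∘ Sum.inl = a ∘ Sum.inl - b ∘ Sum.inl := rfl
  have h2 : (a - b) ∘ Sum.inr ∘ Sum.inr = a ∘ Sum.inr ∘ Sum.inr - b ∘ Sum.inr ∘ Sum.inr := rfl
  have h3 : (a - b) ∘ Sum.inr ∘ Sum.inl = a ∘ Sum.inr ∘ Sum.inl - b ∘ Sum.inr ∘ Sum.inl := rfl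
  have hJab : (fun w => Sum.elim (τ • (-(Aᵀ *ᵥ (w ∘ Sum.inr ∘ Sum.inr))))
        (Sum.elim (τ • (-(Bᵀ *ᵥ (w ∘ Sum.inr ∘ Sum.inr))))
          (τ • (A *ᵥ (w ∘ Sum.inl) + B *ᵥ (w ∘ Sum.inr ∘ Sum.inl) - c)))) a -
      (fun w => Sum.elim (τ • (-(Aᵀ *ᵥ (w ∘ Sum.inr ∘ Sum.inr))))
        (Sum.elim (τ • (-(Bᵀ *ᵥ (w ∘ Sum.inr ∘ Sum.inr))))
          (τ • (A *ᵥ (w ∘ Sum.inl) + B *ᵥ (w ∘ Sum.inr ∘ Sum.inl) - c)))) b =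
      Sum.elim (τ • (-(Aᵀ *ᵥ (d ∘ Sum.inr ∘ Sum.inr))))
        (Sum.elim (τ • (-(Bᵀ *ᵥ (d ∘ Sum.inr ∘ Sum.inr))))
          (τ • (A *ᵥ (d ∘ Sum.inl) + B *ᵥ (d ∘ Sum.inr ∘ Sum.inl)))) := by
    funext i
    rcases i with i | i
    · simp [h1, h2, h3, Matrix.mulVec_sub, hd]; ring
    · rcases i with i | i
      · simp [h1, h2, h3, Matrix.mulVec_sub, hd]; ring
      · simp [h1, h2, h3, Matrix.mulVec_sub, hd]; ring
  rw [hJab, dot_split, Sum.elim_comp_inl, Sum.elim_comp_inr,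
    dot_split (d ∘ Sum.inr), Sum.elim_comp_inl, Sum.elim_comp_inr]
  simp only [dotProduct_smul, dotProduct_neg, dotProduct_add,
    Matrix.dotProduct_mulVec, Matrix.vecMul_transpose, smul_eq_mul,
    Function.comp_assoc]
  rw [show (d ∘ Sum.inr ∘ Sum.inr) ᵥ* A ⬝ᵥ (d ∘ Sum.inl)
        = A *ᵥ (d ∘ Sum.inl) ⬝ᵥ (d ∘ Sum.inr ∘ Sum.inr) from by
      rw [← Matrix.mulVec_transpose, dotProduct_comm,
        Matrix.dotProduct_mulVec, Matrix.vecMul_transpose],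
    show (d ∘ Sum.inr ∘ Sum.inr) ᵥ* B ⬝ᵥ (d ∘ Sum.inr ∘ Sum.inl)
        = B *ᵥ (d ∘ Sum.inr ∘ Sum.inl) ⬝ᵥ (d ∘ Sum.inr ∘ Sum.inr) from by
      rw [← Matrix.mulVec_transpose, dotProduct_comm,
        Matrix.dotProduct_mulVec, Matrix.vecMul_transpose]]
  ring

open Filter in
/-- global convergence of the parameterized proximal point iteration
to a solution of the variational inequality. -/
theorem stmt9 {m n l : ℕ}
    (f : (Fin m → ℝ) → ℝ) (g : (Fin n → ℝ) → ℝ)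
    (hf : ConvexOn ℝ Set.univ f) (hg : ConvexOn ℝ Set.univ g)
    (X : Set (Fin m → ℝ)) (Y : Set (Fin n → ℝ))
    (hXcl : IsClosed X) (hXcv : Convex ℝ X) (hYcl : IsClosed Y) (hYcv : Convex ℝ Y)
    (A : Matrix (Fin l) (Fin m) ℝ) (B : Matrix (Fin l) (Fin n) ℝ)
    (c : Fin l → ℝ) (τ : ℝ) (hτ : τ ≠ 0)
    (M : Set ((Fin m ⊕ (Fin n ⊕ Fin l)) → ℝ))
    (hM : M = {w | (w ∘ Sum.inl) ∈ X ∧ (w ∘ Sum.inr ∘ Sum.inl) ∈ Y})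
    (φ : ((Fin m ⊕ (Fin n ⊕ Fin l)) → ℝ) → ℝ)
    (hφ : φ = fun w => f (w ∘ Sum.inl) + g (w ∘ Sum.inr ∘ Sum.inl))
    (J : ((Fin m ⊕ (Fin n ⊕ Fin l)) → ℝ) → ((Fin m ⊕ (Fin n ⊕ Fin l)) → ℝ))
    (hJ : J = fun w => Sum.elim (τ • (-(Aᵀ *ᵥ (w ∘ Sum.inr ∘ Sum.inr))))
        (Sum.elim (τ • (-(Bᵀ *ᵥ (w ∘ Sum.inr ∘ Sum.inr))))
          (τ • (A *ᵥ (w ∘ Sum.inl) + B *ᵥ (w ∘ Sum.inr ∘ Sum.inl) - c))))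
    (G : Matrix (Fin m ⊕ (Fin n ⊕ Fin l)) (Fin m ⊕ (Fin n ⊕ Fin l)) ℝ)
    (hG : G.PosDef)
    (Mstar : Set ((Fin m ⊕ (Fin n ⊕ Fin l)) → ℝ))
    (hMstar : Mstar =
      {wstar ∈ M | ∀ w ∈ M, φ w - φ wstar + (w - wstar) ⬝ᵥ J wstar ≥ 0})
    (hMstarne : Mstar.Nonempty)
    (w : ℕ → ((Fin m ⊕ (Fin n ⊕ Fin l)) → ℝ))
    (hwM : ∀ k : ℕ, w (k + 1) ∈ M)
    (hineq : ∀ k : ℕ, ∀ v ∈ M,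
      φ v - φ (w (k + 1)) +
        (v - w (k + 1)) ⬝ᵥ (J (w (k + 1)) + G *ᵥ (w (k + 1) - w k)) ≥ 0) :
    ∃ winf ∈ Mstar, Filter.Tendsto w Filter.atTop (nhds winf) := by
  classical
  by_cases hE : IsEmpty (Fin m ⊕ (Fin n ⊕ Fin l))
  · obtain ⟨ws, hws⟩ := hMstarne
    refine ⟨ws, hws, ?_⟩
    have hconst : w = fun _ => ws := funext fun k => funext fun i => hE.elim i
    rw [hconst]
    exact tendsto_const_nhds
  haveI : Nonempty (Fin m ⊕ (Fin n ⊕ Fin l)) := not_isEmpty_iff.1 hE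
  obtain ⟨cG, hcG, hcoer⟩ := quad_coercive G hG
  have hq0 : ∀ v : (Fin m ⊕ (Fin n ⊕ Fin l)) → ℝ, 0 ≤ v ⬝ᵥ (G *ᵥ v) := by
    intro v
    rcases eq_or_ne v 0 with rfl | hv
    · simp
    · exact (hG.dotProduct_mulVec_pos hv).le
  -- Fejér monotonicity
  have fejer : ∀ wbar ∈ Mstar, ∀ k : ℕ,
      (w (k+1) - wbar) ⬝ᵥ (G *ᵥ (w (k+1) - wbar)) +
        (w (k+1) - w k) ⬝ᵥ (G *ᵥ (w (k+1) - w k)) ≤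
      (w k - wbar) ⬝ᵥ (G *ᵥ (w k - wbar)) := by
    intro wbar hwbar k
    rw [hMstar] at hwbar
    obtain ⟨hwbarM, hVI⟩ := hwbar
    have h1 := hineq k wbar hwbarM
    have h2 := hVI (w (k+1)) (hwM k)
    have hskew := skewJ A B c τ J hJ wbar (w (k+1))
    have hdot1 : (wbar - w (k+1)) ⬝ᵥ (J (w (k+1)) + G *ᵥ (w (k+1) - w k))
        = (wbar - w (k+1)) ⬝ᵥ J (w (k+1)) +
          (wbar - w (k+1)) ⬝ᵥ (G *ᵥ (w (k+1) - w k)) :=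
      dotProduct_add _ _ _
    have hdot2 : (w (k+1) - wbar) ⬝ᵥ J wbar = -((wbar - w (k+1)) ⬝ᵥ J wbar) := by
      rw [← neg_dotProduct, neg_sub]
    have hskew' : (wbar - w (k+1)) ⬝ᵥ J wbar - (wbar - w (k+1)) ⬝ᵥ J (w (k+1)) = 0 := by
      rw [← dotProduct_sub]; exact hskew
    have ht : 0 ≤ (wbar - w (k+1)) ⬝ᵥ (G *ᵥ (w (k+1) - w k)) := by
      rw [hdot1] at h1; rw [hdot2] at h2; linarith
    have hexp := quad_expand G hG (w (k+1) - wbar) (w (k+1) - w k)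
    have hab : (w (k+1) - wbar) - (w (k+1) - w k) = w k - wbar := by abel
    rw [hab] at hexp
    have hGb : (w (k+1) - wbar) ⬝ᵥ (G *ᵥ (w (k+1) - w k))
        = -((wbar - w (k+1)) ⬝ᵥ (G *ᵥ (w (k+1) - w k))) := by
      rw [← neg_dotProduct, neg_sub]
    linarith [hexp, ht, hGb]
  have key : ∀ wbar ∈ Mstar,
      Antitone (fun k => (w k - wbar) ⬝ᵥ (G *ᵥ (w k - wbar))) := by
    intro wbar hwbar
    apply antitone_nat_of_succ_le
    intro k
    have h1 := fejer wbar hwbar k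
    have h2 := hq0 (w (k+1) - w k)
    linarith
  obtain ⟨ws, hws⟩ := hMstarne
  have hwsAnti := key ws hws
  set R := Real.sqrt (((w 0 - ws) ⬝ᵥ (G *ᵥ (w 0 - ws))) / cG) with hR
  have hball : ∀ k, w k ∈ Metric.closedBall ws R := by
    intro k
    rw [Metric.mem_closedBall, dist_eq_norm]
    have h1 : cG * ‖w k - ws‖^2 ≤ (w 0 - ws) ⬝ᵥ (G *ᵥ (w 0 - ws)) :=
      le_trans (hcoer _) (hwsAnti (Nat.zero_le k))
    have h2 : ‖w k - ws‖^2 ≤ ((w 0 - ws) ⬝ᵥ (G *ᵥ (w 0 - ws))) / cG := by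
      rw [le_div_iff₀ hcG, mul_comm]; exact h1
    calc ‖w k - ws‖ = Real.sqrt (‖w k - ws‖^2) := (Real.sqrt_sq (norm_nonneg _)).symm
      _ ≤ R := Real.sqrt_le_sqrt h2
  have hbdd : BddBelow (Set.range fun k => (w k - ws) ⬝ᵥ (G *ᵥ (w k - ws))) :=
    ⟨0, by rintro x ⟨k, rfl⟩; exact hq0 _⟩
  have hQlim := tendsto_atTop_ciInf hwsAnti hbdd
  have hdiffq : Tendsto (fun k => (w (k+1) - w k) ⬝ᵥ (G *ᵥ (w (k+1) - w k)))
      atTop (nhds 0) := by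
    have hg0 : Tendsto (fun k => (w k - ws) ⬝ᵥ (G *ᵥ (w k - ws)) -
        (w (k+1) - ws) ⬝ᵥ (G *ᵥ (w (k+1) - ws))) atTop (nhds 0) := by
      have h2 := hQlim.comp (tendsto_add_atTop_nat 1)
      simpa using hQlim.sub h2
    exact squeeze_zero (fun k => hq0 _)
      (fun k => by have := fejer ws hws k; linarith) hg0
  have hdiffnormsq : Tendsto (fun k => ‖w (k+1) - w k‖^2) atTop (nhds 0) := by
    have hdivtend : Tendsto (fun k => ((w (k+1) - w k) ⬝ᵥ (G *ᵥ (w (k+1) - w k)))/cG)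
        atTop (nhds 0) := by
      have h := hdiffq.div_const cG
      simpa only [zero_div] using h
    apply squeeze_zero (fun k => sq_nonneg _) (fun k => ?_) hdivtend
    rw [le_div_iff₀ hcG, mul_comm]; exact hcoer _
  have hdiffnorm : Tendsto (fun k => ‖w (k+1) - w k‖) atTop (nhds 0) := by
    have h := hdiffnormsq.sqrt
    rw [Real.sqrt_zero] at h
    refine h.congr fun k => ?_
    exact Real.sqrt_sq (norm_nonneg _)
  have hdiff0 : Tendsto (fun k => w (k+1) - w k) atTop (nhds 0) :=
    tendsto_zero_iff_norm_tendsto_zero.2 hdiffnorm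
  obtain ⟨winf, -, ψ, hψ, hvlim⟩ := tendsto_subseq_of_bounded
    Metric.isBounded_closedBall (fun k : ℕ => hball (k+1))
  -- continuity facts
  have hcomp1 : Continuous fun v : (Fin m ⊕ (Fin n ⊕ Fin l)) → ℝ => v ∘ Sum.inl :=
    continuous_pi fun i => continuous_apply _
  have hcomp2 : Continuous fun v : (Fin m ⊕ (Fin n ⊕ Fin l)) → ℝ =>
      v ∘ Sum.inr ∘ Sum.inl := continuous_pi fun i => continuous_apply _
  have hcomp3 : Continuous fun v : (Fin m ⊕ (Fin n ⊕ Fin l)) → ℝ =>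
      v ∘ Sum.inr ∘ Sum.inr := continuous_pi fun i => continuous_apply _
  have hφc : Continuous φ := by
    subst hφ
    exact (hf.locallyLipschitz.continuous.comp hcomp1).add
      (hg.locallyLipschitz.continuous.comp hcomp2)
  have hJc : Continuous J := by
    subst hJ
    apply continuous_pi
    rintro (i | i | i)
    · simp only [Sum.elim_inl]
      exact (continuous_apply i).comp
        ((continuous_const.matrix_mulVec hcomp3).neg.const_smul τ)
    · simp only [Sum.elim_inr, Sum.elim_inl]
      exact (continuous_apply i).comp
        ((continuous_const.matrix_mulVec hcomp3).neg.const_smul τ)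
    · simp only [Sum.elim_inr]
      exact (continuous_apply i).comp
        ((((continuous_const.matrix_mulVec hcomp1).add
          (continuous_const.matrix_mulVec hcomp2)).sub continuous_const).const_smul τ)
  have hMcl : IsClosed M := by
    rw [hM]
    exact (hXcl.preimage hcomp1).inter (hYcl.preimage hcomp2)
  have hwinfM : winf ∈ M :=
    hMcl.mem_of_tendsto hvlim (Filter.Eventually.of_forall fun j => hwM (ψ j))
  have hdψ : Tendsto (fun j => w (ψ j + 1) - w (ψ j)) atTop (nhds 0) :=
    hdiff0.comp hψ.tendsto_atTop
  have hwinfstar : winf ∈ Mstar := by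
    rw [hMstar]
    refine ⟨hwinfM, fun v hv => ?_⟩
    have hΦ : Continuous (fun p : (((Fin m ⊕ (Fin n ⊕ Fin l)) → ℝ) ×
        ((Fin m ⊕ (Fin n ⊕ Fin l)) → ℝ)) =>
        φ v - φ p.1 + (v - p.1) ⬝ᵥ (J p.1 + G *ᵥ p.2)) := by
      apply Continuous.add
      · exact continuous_const.sub (hφc.comp continuous_fst)
      · exact Continuous.dotProduct (continuous_const.sub continuous_fst)
          ((hJc.comp continuous_fst).add (continuous_const.matrix_mulVec continuous_snd))
    have hlim : Tendsto (fun j => φ v - φ (w (ψ j + 1)) +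
        (v - w (ψ j + 1)) ⬝ᵥ (J (w (ψ j + 1)) + G *ᵥ (w (ψ j + 1) - w (ψ j))))
        atTop (nhds (φ v - φ winf + (v - winf) ⬝ᵥ (J winf + G *ᵥ (0 : (Fin m ⊕ (Fin n ⊕ Fin l)) → ℝ)))) :=
      (hΦ.tendsto (winf, 0)).comp (hvlim.prodMk_nhds hdψ)
    have h0 : 0 ≤ φ v - φ winf + (v - winf) ⬝ᵥ
        (J winf + G *ᵥ (0 : (Fin m ⊕ (Fin n ⊕ Fin l)) → ℝ)) :=
      ge_of_tendsto' hlim (fun j => hineq (ψ j) v hv)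
    simpa [Matrix.mulVec_zero] using h0
  refine ⟨winf, hwinfstar, ?_⟩
  have hanti := key winf hwinfstar
  have hbdd2 : BddBelow (Set.range fun k => (w k - winf) ⬝ᵥ (G *ᵥ (w k - winf))) :=
    ⟨0, by rintro x ⟨k, rfl⟩; exact hq0 _⟩
  have hQlim2 := tendsto_atTop_ciInf hanti hbdd2
  have hsub : Tendsto (fun j => (w (ψ j + 1) - winf) ⬝ᵥ (G *ᵥ (w (ψ j + 1) - winf)))
      atTop (nhds 0) := by
    have h0 : Tendsto (fun j => w (ψ j + 1) - winf) atTop (nhds 0) := by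
      simpa using hvlim.sub (tendsto_const_nhds (x := winf))
    have h1 : Tendsto (fun j => (w (ψ j + 1) - winf) ⬝ᵥ (G *ᵥ (w (ψ j + 1) - winf)))
        atTop (nhds ((0 : (Fin m ⊕ (Fin n ⊕ Fin l)) → ℝ) ⬝ᵥ
          (G *ᵥ (0 : (Fin m ⊕ (Fin n ⊕ Fin l)) → ℝ)))) :=
      ((quad_cont G).tendsto 0).comp h0
    simpa only [zero_dotProduct] using h1
  have hcompat : Tendsto (fun j => ψ j + 1) atTop atTop :=
    (tendsto_add_atTop_nat 1).comp hψ.tendsto_atTop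
  have hsub2 := hQlim2.comp hcompat
  have hL0 : (⨅ k, (w k - winf) ⬝ᵥ (G *ᵥ (w k - winf))) = 0 :=
    tendsto_nhds_unique hsub2 hsub
  rw [hL0] at hQlim2
  have hnormsq : Tendsto (fun k => ‖w k - winf‖^2) atTop (nhds 0) := by
    have hdivtend : Tendsto (fun k => ((w k - winf) ⬝ᵥ (G *ᵥ (w k - winf)))/cG)
        atTop (nhds 0) := by
      have h := hQlim2.div_const cG
      simpa only [zero_div] using h
    apply squeeze_zero (fun k => sq_nonneg _) (fun k => ?_) hdivtend
    rw [le_div_iff₀ hcG, mul_comm]; exact hcoer _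
  have hnorm : Tendsto (fun k => ‖w k - winf‖) atTop (nhds 0) := by
    have h := hnormsq.sqrt
    rw [Real.sqrt_zero] at h
    refine h.congr fun k => ?_
    exact Real.sqrt_sq (norm_nonneg _)
  rw [tendsto_iff_norm_sub_tendsto_zero]
  exact hnorm
end

section
/- Let f : ℝ^m → ℝ and g : ℝ^n → ℝ be convex, X ⊆ ℝ^m, Y ⊆ ℝ^n closed convex, A ∈ ℝ^{l×m}, B ∈ ℝ^{l×n}, c ∈ ℝ^l, τ ≠ 0, M = X × Y × ℝ^l, φ(x, y) = f(x) + g(y), J(x, y, λ) = τ(−Aᵀλ, −Bᵀλ, Ax + By − c), and let G be a symmetric positive semidefinite (m+n+l)×(m+n+l) matrix. Let {w^k} be a sequence with w^{k+1} ∈ M satisfying, for every k ≥ 0, φ(u) − φ(u^{k+1}) + ⟨w − w^{k+1}, J(w^{k+1}) + G(w^{k+1} − w^k)⟩ ≥ 0 for all w ∈ M. Define the ergodic averages w_t = (1/(t+1)) Σ_{k=0}^{t} w^{k+1} and u_t = (1/(t+1)) Σ_{k=0}^{t} u^{k+1}. Then for every t ≥ 0 and every w ∈ M, φ(u_t) −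 φ(u) + ⟨w_t − w, J(w)⟩ ≤ (1/(2(t+1))) ‖w^0 − w‖_G². -/
open Matrix Finset

/-- Dot product against a `Sum.elim` vector splits into three pieces. -/
lemma stmt10_dot_elim {m n l : ℕ} (p : (Fin m ⊕ (Fin n ⊕ Fin l)) → ℝ)
    (r : Fin m → ℝ) (s : Fin n → ℝ) (u : Fin l → ℝ) :
    p ⬝ᵥ Sum.elim r (Sum.elim s u)
      = (p ∘ Sum.inl) ⬝ᵥ r + (p ∘ Sum.inr ∘ Sum.inl) ⬝ᵥ s
        + (p ∘ Sum.inr ∘ Sum.inr) ⬝ᵥ u := by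
  simp [dotProduct, Fintype.sum_sum_type, add_assoc, Function.comp]

/-- worst-case `O(1/t)` ergodic convergence rate of the
parameterized proximal point iteration. -/
theorem stmt10 {m n l : ℕ}
    (f : (Fin m → ℝ) → ℝ) (g : (Fin n → ℝ) → ℝ)
    (hf : ConvexOn ℝ Set.univ f) (hg : ConvexOn ℝ Set.univ g)
    (X : Set (Fin m → ℝ)) (Y : Set (Fin n → ℝ))
    (hXcl : IsClosed X) (hXcv : Convex ℝ X) (hYcl : IsClosed Y) (hYcv : Convex ℝ Y)
    (A : Matrix (Fin l) (Fin m) ℝ) (B : Matrix (Fin l) (Fin n) ℝ)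
    (c : Fin l → ℝ) (τ : ℝ) (hτ : τ ≠ 0)
    (M : Set ((Fin m ⊕ (Fin n ⊕ Fin l)) → ℝ))
    (hM : M = {w | (w ∘ Sum.inl) ∈ X ∧ (w ∘ Sum.inr ∘ Sum.inl) ∈ Y})
    (φ : ((Fin m ⊕ (Fin n ⊕ Fin l)) → ℝ) → ℝ)
    (hφ : φ = fun w => f (w ∘ Sum.inl) + g (w ∘ Sum.inr ∘ Sum.inl))
    (J : ((Fin m ⊕ (Fin n ⊕ Fin l)) → ℝ) → ((Fin m ⊕ (Fin n ⊕ Fin l)) → ℝ))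
    (hJ : J = fun w => Sum.elim (τ • (-(Aᵀ *ᵥ (w ∘ Sum.inr ∘ Sum.inr))))
        (Sum.elim (τ • (-(Bᵀ *ᵥ (w ∘ Sum.inr ∘ Sum.inr))))
          (τ • (A *ᵥ (w ∘ Sum.inl) + B *ᵥ (w ∘ Sum.inr ∘ Sum.inl) - c))))
    (G : Matrix (Fin m ⊕ (Fin n ⊕ Fin l)) (Fin m ⊕ (Fin n ⊕ Fin l)) ℝ)
    (hG : G.PosSemidef)
    (w : ℕ → ((Fin m ⊕ (Fin n ⊕ Fin l)) → ℝ))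
    (hwM : ∀ k : ℕ, w (k + 1) ∈ M)
    (hineq : ∀ k : ℕ, ∀ v ∈ M,
      φ v - φ (w (k + 1)) +
        (v - w (k + 1)) ⬝ᵥ (J (w (k + 1)) + G *ᵥ (w (k + 1) - w k)) ≥ 0)
    (wbar : ℕ → ((Fin m ⊕ (Fin n ⊕ Fin l)) → ℝ))
    (hwbar : ∀ t : ℕ,
      wbar t = (1 / ((t : ℝ) + 1)) • ∑ k ∈ Finset.range (t + 1), w (k + 1)) :
    ∀ t : ℕ, ∀ v ∈ M,
      φ (wbar t) - φ v + (wbar t - v) ⬝ᵥ J v ≤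
        (1 / (2 * ((t : ℝ) + 1))) * ((w 0 - v) ⬝ᵥ (G *ᵥ (w 0 - v))) := by
  intro t v hv
  -- symmetry of G as a bilinear form
  have hGsym : ∀ x y : (Fin m ⊕ (Fin n ⊕ Fin l)) → ℝ,
      x ⬝ᵥ (G *ᵥ y) = y ⬝ᵥ (G *ᵥ x) := by
    intro x y
    have hGe : Gᵀ = G := by
      have := hG.1
      simpa [Matrix.IsHermitian, Matrix.conjTranspose_eq_transpose_of_trivial] using this
    rw [dotProduct_mulVec, ← hGe, vecMul_transpose, dotProduct_comm, hGe]
  have hGpos : ∀ x : (Fin m ⊕ (Fin n ⊕ Fin l)) → ℝ, 0 ≤ x ⬝ᵥ (G *ᵥ x) := by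
    intro x
    have := hG.dotProduct_mulVec_nonneg x
    simpa using this
  -- skew symmetry of J
  have hskew : ∀ a b : (Fin m ⊕ (Fin n ⊕ Fin l)) → ℝ,
      (a - b) ⬝ᵥ J a = (a - b) ⬝ᵥ J b := by
    intro a b
    subst hJ
    simp only [stmt10_dot_elim]
    have h1 : ∀ p : (Fin m ⊕ (Fin n ⊕ Fin l)) → ℝ, ∀ q : Fin l → ℝ,
        (p ∘ Sum.inl) ⬝ᵥ (τ • -(Aᵀ *ᵥ q)) = -(τ * ((A *ᵥ (p ∘ Sum.inl)) ⬝ᵥ q)) := by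
      intro p q
      rw [dotProduct_smul, dotProduct_neg, dotProduct_mulVec, vecMul_transpose]
      simp [mul_comm]
    have h2 : ∀ p : (Fin m ⊕ (Fin n ⊕ Fin l)) → ℝ, ∀ q : Fin l → ℝ,
        (p ∘ Sum.inr ∘ Sum.inl) ⬝ᵥ (τ • -(Bᵀ *ᵥ q))
          = -(τ * ((B *ᵥ (p ∘ Sum.inr ∘ Sum.inl)) ⬝ᵥ q)) := by
      intro p q
      rw [dotProduct_smul, dotProduct_neg, dotProduct_mulVec, vecMul_transpose]
      simp [mul_comm]
    have hsA : (a - b) ∘ Sum.inl = (a ∘ Sum.inl) - (b ∘ Sum.inl) := rfl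
    have hsB : (a - b) ∘ Sum.inr ∘ Sum.inl
        = (a ∘ Sum.inr ∘ Sum.inl) - (b ∘ Sum.inr ∘ Sum.inl) := rfl
    have hsC : (a - b) ∘ Sum.inr ∘ Sum.inr
        = (a ∘ Sum.inr ∘ Sum.inr) - (b ∘ Sum.inr ∘ Sum.inr) := rfl
    rw [h1, h1, h2, h2]
    simp only [hsA, hsB, hsC, mulVec_sub, sub_dotProduct, dotProduct_sub,
      dotProduct_smul, dotProduct_add, smul_eq_mul]
    simp only [dotProduct_comm _ (A *ᵥ _)]
    simp only [dotProduct_comm _ (B *ᵥ _)]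
    ring
  -- quadratic form
  set Q : ((Fin m ⊕ (Fin n ⊕ Fin l)) → ℝ) → ℝ := fun x => (x - v) ⬝ᵥ (G *ᵥ (x - v)) with hQ
  -- key per-step estimate
  have key : ∀ k : ℕ, φ (w (k + 1)) - φ v + (w (k + 1) - v) ⬝ᵥ J v
      ≤ (Q (w k) - Q (w (k + 1))) / 2 := by
    intro k
    have h := hineq k v hv
    rw [dotProduct_add] at h
    have hswap : (v - w (k + 1)) ⬝ᵥ J (w (k + 1)) = (v - w (k + 1)) ⬝ᵥ J v := by
      have := hskew v (w (k + 1))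
      linarith
    rw [hswap] at h
    -- bound the G-term
    have hGterm : (v - w (k + 1)) ⬝ᵥ (G *ᵥ (w (k + 1) - w k))
        ≤ (Q (w k) - Q (w (k + 1))) / 2 := by
      have hq : ∀ x y : (Fin m ⊕ (Fin n ⊕ Fin l)) → ℝ,
          (x - y) ⬝ᵥ (G *ᵥ (x - y))
            = x ⬝ᵥ (G *ᵥ x) - 2 * (x ⬝ᵥ (G *ᵥ y)) + y ⬝ᵥ (G *ᵥ y) := by
        intro x y
        rw [mulVec_sub, sub_dotProduct, dotProduct_sub, dotProduct_sub,
          hGsym y x]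
        ring
      have hid : 2 * ((v - w (k + 1)) ⬝ᵥ (G *ᵥ (w (k + 1) - w k)))
          = Q (w k) - Q (w (k + 1))
            - (w (k + 1) - w k) ⬝ᵥ (G *ᵥ (w (k + 1) - w k)) := by
        simp only [hQ, mulVec_sub, sub_dotProduct, dotProduct_sub]
        linarith [hGsym v (w k), hGsym v (w (k + 1)), hGsym (w k) (w (k + 1))]
      have hpos := hGpos (w (k + 1) - w k)
      linarith
    have hdual : (w (k + 1) - v) ⬝ᵥ J v = -((v - w (k + 1)) ⬝ᵥ J v) := by
      have : (w (k + 1) - v) = -(v - w (k + 1)) := by ring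
      rw [this, neg_dotProduct]
    rw [hdual]
    linarith
  -- sum the key estimate
  have hsum : ∑ k ∈ Finset.range (t + 1),
      (φ (w (k + 1)) - φ v + (w (k + 1) - v) ⬝ᵥ J v)
      ≤ Q (w 0) / 2 := by
    calc ∑ k ∈ Finset.range (t + 1),
          (φ (w (k + 1)) - φ v + (w (k + 1) - v) ⬝ᵥ J v)
        ≤ ∑ k ∈ Finset.range (t + 1), (Q (w k) - Q (w (k + 1))) / 2 :=
          Finset.sum_le_sum fun k _ => key k
      _ = (Q (w 0) - Q (w (t + 1))) / 2 := by
          rw [← Finset.sum_div, Finset.sum_range_sub' (fun k => Q (w k))]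
      _ ≤ Q (w 0) / 2 := by
          have := hGpos (w (t + 1) - v)
          simp only [hQ]
          linarith
  have hN : (0 : ℝ) < (t : ℝ) + 1 := by positivity
  -- Jensen: φ (wbar t) ≤ average of φ (w (k+1))
  have hJensen : φ (wbar t) ≤ (1 / ((t : ℝ) + 1)) * ∑ k ∈ Finset.range (t + 1), φ (w (k + 1)) := by
    have hw1 : ∀ k ∈ Finset.range (t + 1), (0 : ℝ) ≤ 1 / ((t : ℝ) + 1) :=
      fun k _ => by positivity
    have hw2 : ∑ _k ∈ Finset.range (t + 1), (1 / ((t : ℝ) + 1)) = 1 := by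
      rw [Finset.sum_const, Finset.card_range]
      rw [nsmul_eq_mul]
      push_cast
      field_simp
    have hcompl : wbar t ∘ Sum.inl
        = ∑ k ∈ Finset.range (t + 1), (1 / ((t : ℝ) + 1)) • (w (k + 1) ∘ Sum.inl) := by
      funext i
      rw [hwbar t]
      simp [Finset.sum_apply, Finset.mul_sum]
    have hcompr : wbar t ∘ Sum.inr ∘ Sum.inl
        = ∑ k ∈ Finset.range (t + 1),
            (1 / ((t : ℝ) + 1)) • (w (k + 1) ∘ Sum.inr ∘ Sum.inl) := by
      funext i
      rw [hwbar t]
      simp [Finset.sum_apply, Finset.mul_sum]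
    have hfb : f (wbar t ∘ Sum.inl)
        ≤ ∑ k ∈ Finset.range (t + 1), (1 / ((t : ℝ) + 1)) • f (w (k + 1) ∘ Sum.inl) := by
      rw [hcompl]
      exact hf.map_sum_le hw1 hw2 (fun k _ => Set.mem_univ _)
    have hgb : g (wbar t ∘ Sum.inr ∘ Sum.inl)
        ≤ ∑ k ∈ Finset.range (t + 1),
            (1 / ((t : ℝ) + 1)) • g (w (k + 1) ∘ Sum.inr ∘ Sum.inl) := by
      rw [hcompr]
      exact hg.map_sum_le hw1 hw2 (fun k _ => Set.mem_univ _)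
    subst hφ
    simp only [smul_eq_mul] at hfb hgb
    rw [Finset.mul_sum]
    simp only [mul_add]
    rw [Finset.sum_add_distrib]
    exact add_le_add hfb hgb
  -- linearity of the dot product term
  have hdot : (wbar t - v) ⬝ᵥ J v
      = (1 / ((t : ℝ) + 1)) * ∑ k ∈ Finset.range (t + 1), ((w (k + 1) - v) ⬝ᵥ J v) := by
    have hsumd : (∑ k ∈ Finset.range (t + 1), w (k + 1)) ⬝ᵥ J v
        = ∑ k ∈ Finset.range (t + 1), (w (k + 1) ⬝ᵥ J v) := by
      simp only [dotProduct, Finset.sum_apply, Finset.sum_mul]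
      exact Finset.sum_comm
    rw [hwbar t, sub_dotProduct, smul_dotProduct, hsumd]
    simp only [sub_dotProduct, Finset.sum_sub_distrib, Finset.sum_const,
      Finset.card_range, smul_eq_mul, nsmul_eq_mul]
    push_cast
    field_simp
  -- combine
  have hfinal : φ (wbar t) - φ v + (wbar t - v) ⬝ᵥ J v
      ≤ (1 / ((t : ℝ) + 1)) * ∑ k ∈ Finset.range (t + 1),
          (φ (w (k + 1)) - φ v + (w (k + 1) - v) ⬝ᵥ J v) := by
    rw [hdot]
    have hφv : φ v = (1 / ((t : ℝ) + 1)) * ∑ _k ∈ Finset.range (t + 1), φ v := by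
      rw [Finset.sum_const, Finset.card_range, nsmul_eq_mul]
      push_cast
      field_simp
    simp only [Finset.sum_add_distrib, Finset.sum_sub_distrib, mul_add, mul_sub]
    have : (1 / ((t : ℝ) + 1)) * ∑ _k ∈ Finset.range (t + 1), φ v = φ v := by
      rw [← hφv]
    rw [this]
    linarith
  calc φ (wbar t) - φ v + (wbar t - v) ⬝ᵥ J v
      ≤ (1 / ((t : ℝ) + 1)) * ∑ k ∈ Finset.range (t + 1),
          (φ (w (k + 1)) - φ v + (w (k + 1) - v) ⬝ᵥ J v) := hfinal
    _ ≤ (1 / ((t : ℝ) + 1)) * (Q (w 0) / 2) := by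
        apply mul_le_mul_of_nonneg_left hsum (by positivity)
    _ = (1 / (2 * ((t : ℝ) + 1))) * ((w 0 - v) ⬝ᵥ (G *ᵥ (w 0 - v))) := by
        have hQ0 : Q (w 0) = (w 0 - v) ⬝ᵥ (G *ᵥ (w 0 - v)) := rfl
        rw [hQ0]
        generalize (w 0 - v) ⬝ᵥ (G *ᵥ (w 0 - v)) = q
        rw [div_mul_eq_mul_div, one_mul, div_mul_eq_mul_div, one_mul,
          div_eq_div_iff (by positivity) (by positivity)]
        ring
end

section
/- Let G be a symmetric positive definite N×N real matrix, let S ⊆ ℝ^N be nonempty, and let {w^k} ⊆ ℝ^N be a sequence such that for every w* ∈ S and every k ≥ 0, ‖w^{k+1} − w*‖_G² ≤ ‖w^k − w*‖_G² − ‖w^{k+1} − w^k‖_G². Then the sequence {w^k} is bounded and ‖w^k − w^{k+1}‖ → 0 as k → ∞; moreover, if some accumulation point w^∞ of {w^k} lies in S, then the whole sequence converges to w^∞. -/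
open Matrix

private lemma stmt17_quad_cont {N : ℕ} (G : Matrix (Fin N) (Fin N) ℝ) :
    Continuous fun v : Fin N → ℝ => v ⬝ᵥ (G *ᵥ v) :=
  continuous_id.dotProduct (continuous_const.matrix_mulVec continuous_id)

private lemma stmt17_coercive {N : ℕ} (G : Matrix (Fin N) (Fin N) ℝ) (hG : G.PosDef) :
    ∃ c > 0, ∀ v : Fin N → ℝ, c * ‖v‖ ^ 2 ≤ v ⬝ᵥ (G *ᵥ v) := by
  rcases isEmpty_or_nonempty (Fin N) with h | h
  · refine ⟨1, one_pos, fun v => ?_⟩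
    have hv : v = 0 := Subsingleton.elim v 0
    simp [hv]
  · have hsph : (Metric.sphere (0 : Fin N → ℝ) 1).Nonempty :=
      NormedSpace.sphere_nonempty.mpr zero_le_one
    obtain ⟨v₀, hv₀, hmin⟩ := (isCompact_sphere (0 : Fin N → ℝ) 1).exists_isMinOn hsph
      (stmt17_quad_cont G).continuousOn
    have hv₀norm : ‖v₀‖ = 1 := by simpa using hv₀
    have hv₀ne : v₀ ≠ 0 := by
      intro h0; rw [h0] at hv₀norm; simp at hv₀norm
    have hc : 0 < v₀ ⬝ᵥ (G *ᵥ v₀) := by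
      have := (posDef_iff_dotProduct_mulVec.mp hG).2 hv₀ne
      simpa using this
    refine ⟨v₀ ⬝ᵥ (G *ᵥ v₀), hc, fun v => ?_⟩
    rcases eq_or_ne v 0 with rfl | hv
    · simp
    · have hn : 0 < ‖v‖ := norm_pos_iff.mpr hv
      have hu : (‖v‖⁻¹ • v) ∈ Metric.sphere (0 : Fin N → ℝ) 1 := by
        simp [norm_smul, abs_of_pos (inv_pos.mpr hn), inv_mul_cancel₀ hn.ne']
      have hmin' : v₀ ⬝ᵥ (G *ᵥ v₀) ≤ (‖v‖⁻¹ • v) ⬝ᵥ (G *ᵥ (‖v‖⁻¹ • v)) := hmin hu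
      have hval : (‖v‖⁻¹ • v) ⬝ᵥ (G *ᵥ (‖v‖⁻¹ • v)) =
          ‖v‖⁻¹ * (‖v‖⁻¹ * (v ⬝ᵥ (G *ᵥ v))) := by
        rw [mulVec_smul, smul_dotProduct, dotProduct_smul, smul_eq_mul, smul_eq_mul]
      rw [hval] at hmin'
      have h2 := mul_le_mul_of_nonneg_right hmin' (sq_nonneg ‖v‖)
      have hne : ‖v‖ ≠ 0 := hn.ne'
      calc v₀ ⬝ᵥ (G *ᵥ v₀) * ‖v‖ ^ 2
          ≤ ‖v‖⁻¹ * (‖v‖⁻¹ * (v ⬝ᵥ (G *ᵥ v))) * ‖v‖ ^ 2 := h2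
        _ = v ⬝ᵥ (G *ᵥ v) := by field_simp [sq]


private lemma stmt17_tendsto_of_sq {u : ℕ → ℝ} (hu : ∀ k, 0 ≤ u k)
    (h : Filter.Tendsto (fun k => u k ^ 2) Filter.atTop (nhds 0)) :
    Filter.Tendsto u Filter.atTop (nhds 0) := by
  have h2 : Filter.Tendsto (fun k => Real.sqrt (u k ^ 2)) Filter.atTop
      (nhds (Real.sqrt 0)) := (Real.continuous_sqrt.tendsto 0).comp h
  have heq : (fun k => Real.sqrt (u k ^ 2)) = u := funext fun k => Real.sqrt_sq (hu k)
  rwa [Real.sqrt_zero, heq] at h2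

/-- a sequence which is Fejér-monotone in the `G`-norm (G positive
definite) with respect to a nonempty set `S` is bounded, its successive
differences tend to zero, and it converges to any of its accumulation points
lying in `S`. -/
theorem stmt17 {N : ℕ} (G : Matrix (Fin N) (Fin N) ℝ) (hG : G.PosDef)
    (S : Set (Fin N → ℝ)) (hS : S.Nonempty)
    (w : ℕ → (Fin N → ℝ))
    (hfejer : ∀ wstar ∈ S, ∀ k : ℕ,
      (w (k + 1) - wstar) ⬝ᵥ (G *ᵥ (w (k + 1) - wstar)) ≤
        (w k - wstar) ⬝ᵥ (G *ᵥ (w k - wstar)) -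
          (w (k + 1) - w k) ⬝ᵥ (G *ᵥ (w (k + 1) - w k))) :
    Bornology.IsBounded (Set.range w) ∧
    Filter.Tendsto (fun k => ‖w k - w (k + 1)‖) Filter.atTop (nhds 0) ∧
    ∀ winf ∈ S, MapClusterPt winf Filter.atTop w →
      Filter.Tendsto w Filter.atTop (nhds winf) := by
  obtain ⟨c, hc, hcoer⟩ := stmt17_coercive G hG
  set f : (Fin N → ℝ) → ℝ := fun v => v ⬝ᵥ (G *ᵥ v) with hfdef
  have hf0 : ∀ v, 0 ≤ f v := fun v =>
    le_trans (by positivity) (hcoer v)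
  -- antitonicity of the G-quadratic distances
  have hanti : ∀ wstar ∈ S, Antitone (fun k => f (w k - wstar)) := by
    intro wstar hws
    apply antitone_nat_of_succ_le
    intro k
    have h1 := hfejer wstar hws k
    have h2 := hf0 (w (k + 1) - w k)
    simp only [hfdef] at *
    linarith
  have hbdd : ∀ wstar ∈ S, BddBelow (Set.range fun k => f (w k - wstar)) := by
    intro wstar hws
    exact ⟨0, fun x ⟨k, hk⟩ => hk ▸ hf0 _⟩
  obtain ⟨s0, hs0⟩ := hS
  -- the limits of the quadratic distances
  have hlim : ∀ wstar ∈ S, ∃ L, Filter.Tendsto (fun k => f (w k - wstar))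
      Filter.atTop (nhds L) :=
    fun wstar hws => ⟨_, tendsto_atTop_ciInf (hanti wstar hws) (hbdd wstar hws)⟩
  refine ⟨?_, ?_, ?_⟩
  · -- boundedness
    apply isBounded_iff_forall_norm_le.mpr
    refine ⟨Real.sqrt (f (w 0 - s0) / c) + ‖s0‖, ?_⟩
    rintro x ⟨k, rfl⟩
    have h1 : c * ‖w k - s0‖ ^ 2 ≤ f (w 0 - s0) :=
      le_trans (hcoer _) (hanti s0 hs0 (Nat.zero_le k))
    have h2 : ‖w k - s0‖ ≤ Real.sqrt (f (w 0 - s0) / c) := by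
      rw [show ‖w k - s0‖ = Real.sqrt (‖w k - s0‖ ^ 2) from
        (Real.sqrt_sq (norm_nonneg _)).symm]
      apply Real.sqrt_le_sqrt
      rw [le_div_iff₀ hc, mul_comm]
      exact h1
    calc ‖w k‖ = ‖(w k - s0) + s0‖ := by ring_nf
      _ ≤ ‖w k - s0‖ + ‖s0‖ := norm_add_le _ _
      _ ≤ Real.sqrt (f (w 0 - s0) / c) + ‖s0‖ := by linarith
  · -- successive differences tend to zero
    obtain ⟨L, hL⟩ := hlim s0 hs0
    have hLsucc : Filter.Tendsto (fun k => f (w (k + 1) - s0)) Filter.atTop (nhds L) :=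
      hL.comp (Filter.tendsto_add_atTop_nat 1)
    have hdiff : Filter.Tendsto
        (fun k => (f (w k - s0) - f (w (k + 1) - s0)) / c) Filter.atTop (nhds 0) := by
      have := (hL.sub hLsucc).div_const c
      simpa using this
    apply stmt17_tendsto_of_sq (fun k => norm_nonneg _)
    apply squeeze_zero (fun k => sq_nonneg _) (g := fun k =>
      (f (w k - s0) - f (w (k + 1) - s0)) / c) ?_ hdiff
    intro k
    rw [le_div_iff₀ hc]
    have h1 := hfejer s0 hs0 k
    have h2 : c * ‖w (k + 1) - w k‖ ^ 2 ≤ f (w (k + 1) - w k) := hcoer _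
    rw [norm_sub_rev]
    simp only [hfdef] at *
    linarith
  · -- convergence to an accumulation point in S
    intro winf hwinf hcl
    obtain ⟨φ, hφ, hconv⟩ := TopologicalSpace.FirstCountableTopology.tendsto_subseq hcl
    have hb := tendsto_atTop_ciInf (hanti winf hwinf) (hbdd winf hwinf)
    set L := ⨅ k, f (w k - winf) with hLdef
    -- the subsequence of quadratic distances tends to 0
    have hfcont : Continuous fun v : Fin N → ℝ => f (v - winf) :=
      (stmt17_quad_cont G).comp (continuous_id.sub continuous_const)
    have hsub0 : Filter.Tendsto (fun k => f (w (φ k) - winf)) Filter.atTop (nhds 0) := by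
      have := (hfcont.tendsto winf).comp hconv
      simpa [Function.comp_def, hfdef] using this
    have hsubL : Filter.Tendsto (fun k => f (w (φ k) - winf)) Filter.atTop (nhds L) :=
      hb.comp (hφ.tendsto_atTop)
    have hL0 : L = 0 := tendsto_nhds_unique hsubL hsub0
    rw [hL0] at hb
    -- conclude
    rw [tendsto_iff_norm_sub_tendsto_zero]
    apply stmt17_tendsto_of_sq (fun k => norm_nonneg _)
    apply squeeze_zero (fun k => sq_nonneg _) (g := fun k => f (w k - winf) / c) ?_
      (by simpa using hb.div_const c)
    intro k
    rw [le_div_iff₀ hc, mul_comm]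
    exact hcoer _
end
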